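/- Let z = r e^{iφ} with r > 1, n ≥ 2, and K the attractor with zK = ⋃_{i=0}^{n−1}(K+i), with symmetry center x₀ = (n−1)/(2(z−1)). Then the width function of K around x₀ satisfies 2h(α) = (n−1) Σ_{j=1}^∞ r^{−j} |cos(α + jφ)| for every angle α, where h(α) = sup_{k∈K} Re((k − x₀) e^{−iα}). -/

import Mathlib

set_option maxHeartbeats 1600000 in
theorem width_series_complex_base {n : ℕ} (hn : 2 ≤ n)
    (r φ : ℝ) (hr : 1 < r) (z : ℂ) (hz : z = r * Complex.exp (φ * Complex.I))
    (K : Set ℂ) (hK : K.Nonempty) (hKc : IsCompact K)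
    (hself : (fun w => z * w) '' K = ⋃ i : Fin n, (fun k => k + (i : ℂ)) '' K)
    (x₀ : ℂ) (hx₀ : x₀ = (n - 1 : ℂ) / (2 * (z - 1)))
    (α : ℝ) :
    HasSum
      (fun j : ℕ => (n - 1 : ℝ) * r⁻¹ ^ (j + 1) * |Real.cos (α + (j + 1) * φ)|)
      (2 * sSup ((fun k => ((k - x₀) * Complex.exp (-(α : ℂ) * Complex.I)).re) '' K)) := by
  have hr0 : (0:ℝ) < r := lt_trans one_pos hr
  have habs : ‖z‖ = r := by
    rw [hz, norm_mul, Complex.norm_exp_ofReal_mul_I, Complex.norm_real, Real.norm_eq_abs, abs_of_pos hr0, mul_one]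
  have hz1 : z ≠ 1 := by
    intro h; rw [h, norm_one] at habs; linarith
  set c : ℝ := ((n:ℝ) - 1)/2 with hc
  have hcpos : 0 < c := by
    have : (2:ℝ) ≤ (n:ℝ) := by exact_mod_cast hn
    rw [hc]; linarith
  have hzx : z * x₀ = x₀ + (c:ℂ) := by
    have hz1' : z - 1 ≠ 0 := sub_ne_zero.mpr hz1
    rw [hx₀, hc]
    push_cast
    field_simp
    ring
  set F : ℝ → ℂ → ℝ := fun β k => ((k - x₀) * Complex.exp (-(β:ℂ) * Complex.I)).re with hF
  set S : ℝ → ℝ := fun β => sSup (F β '' K) with hS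
  have hcont : ∀ β : ℝ, Continuous (F β) := fun β =>
    Complex.continuous_re.comp ((continuous_id.sub continuous_const).mul continuous_const)
  have hmax : ∀ β : ℝ, ∃ k ∈ K, IsMaxOn (F β) K k := fun β =>
    hKc.exists_isMaxOn hK (hcont β).continuousOn
  have hSval : ∀ β k, k ∈ K → IsMaxOn (F β) K k → S β = F β k := by
    intro β k hk hm
    refine IsGreatest.csSup_eq ⟨⟨k, hk, rfl⟩, ?_⟩
    rintro _ ⟨k', hk', rfl⟩
    exact (isMaxOn_iff.mp hm) k' hk'
  have hbdd : ∀ β : ℝ, BddAbove (F β '' K) := fun β => (hKc.image (hcont β)).bddAbove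
  -- uniform bound on S
  obtain ⟨kc, hkc, hkcm⟩ := hKc.exists_isMaxOn hK
    (Continuous.continuousOn (by continuity : Continuous fun k : ℂ => ‖k - x₀‖))
  set C : ℝ := ‖kc - x₀‖ with hCdef
  have hFbound : ∀ β k, k ∈ K → |F β k| ≤ C := by
    intro β k hk
    have h1 : |F β k| ≤ ‖(k - x₀) * Complex.exp (-(β:ℂ) * Complex.I)‖ :=
      Complex.abs_re_le_norm _
    rw [norm_mul] at h1
    have h2 : ‖Complex.exp (-(β:ℂ) * Complex.I)‖ = 1 := by
      rw [show -(β:ℂ) * Complex.I = ((-β:ℝ):ℂ) * Complex.I by push_cast; ring,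
        Complex.norm_exp_ofReal_mul_I]
    rw [h2, mul_one] at h1
    exact h1.trans ((isMaxOn_iff.mp hkcm) k hk)
  have hSbound : ∀ β : ℝ, |S β| ≤ C := by
    intro β
    obtain ⟨k, hk, hm⟩ := hmax β
    rw [hSval β k hk hm]
    exact hFbound β k hk
  have hexp_re : ∀ γ : ℝ, (Complex.exp (-(γ:ℂ) * Complex.I)).re = Real.cos γ := by
    intro γ
    rw [show -(γ:ℂ) * Complex.I = ((-γ:ℝ):ℂ) * Complex.I by push_cast; ring,
      Complex.exp_ofReal_mul_I_re, Real.cos_neg]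
  -- the algebraic identity
  have halg : ∀ (β : ℝ) (k : ℂ), F (β + φ) (z * k) = r * F β k + c * Real.cos (β + φ) := by
    intro β k
    have eq1 : z * k - x₀ = z * (k - x₀) + (c:ℂ) := by
      rw [mul_sub, hzx]; ring
    have e1 : z * Complex.exp (-((β + φ : ℝ):ℂ) * Complex.I)
        = (r:ℂ) * Complex.exp (-(β:ℂ) * Complex.I) := by
      rw [hz, mul_assoc, ← Complex.exp_add]
      congr 1
      push_cast
      ring
    show ((z * k - x₀) * Complex.exp (-((β + φ : ℝ):ℂ) * Complex.I)).re = _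
    rw [eq1, add_mul, Complex.add_re]
    have p1 : (z * (k - x₀) * Complex.exp (-((β + φ : ℝ):ℂ) * Complex.I)).re = r * F β k := by
      rw [mul_comm z (k - x₀), mul_assoc, e1, show (k - x₀) * ((r:ℂ) * Complex.exp (-(β:ℂ) * Complex.I))
        = (r:ℂ) * ((k - x₀) * Complex.exp (-(β:ℂ) * Complex.I)) by ring, Complex.re_ofReal_mul]
    have p2 : ((c:ℂ) * Complex.exp (-((β + φ : ℝ):ℂ) * Complex.I)).re = c * Real.cos (β + φ) := by
      rw [Complex.re_ofReal_mul, hexp_re]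
    rw [p1, p2]
  -- shift identity
  have hshift : ∀ (θ : ℝ) (k' : ℂ) (t : ℝ), F θ (k' + (t:ℂ)) = F θ k' + t * Real.cos θ := by
    intro θ k' t
    show ((k' + (t:ℂ) - x₀) * Complex.exp (-(θ:ℂ) * Complex.I)).re = _
    rw [show (k' + (t:ℂ) - x₀) * Complex.exp (-(θ:ℂ) * Complex.I)
        = (k' - x₀) * Complex.exp (-(θ:ℂ) * Complex.I) + (t:ℂ) * Complex.exp (-(θ:ℂ) * Complex.I)
        by ring, Complex.add_re, Complex.re_ofReal_mul, hexp_re]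
  -- key functional equation
  have hkey : ∀ β : ℝ, r * S β = S (β + φ) + c * |Real.cos (β + φ)| := by
    intro β
    obtain ⟨k₁, hk₁, hm₁⟩ := hmax β
    obtain ⟨k₂, hk₂, hm₂⟩ := hmax (β + φ)
    have hS1 := hSval β k₁ hk₁ hm₁
    have hS2 := hSval (β + φ) k₂ hk₂ hm₂
    have hle : r * S β ≤ S (β + φ) + c * |Real.cos (β + φ)| := by
      have hz1mem : z * k₁ ∈ (fun w => z * w) '' K := ⟨k₁, hk₁, rfl⟩
      rw [hself] at hz1mem
      rcases Set.mem_iUnion.mp hz1mem with ⟨i, k', hk', hEq⟩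
      have hi : ((i : ℕ) : ℝ) ≤ (n:ℝ) - 1 := by
        have := i.isLt
        have : (i : ℕ) ≤ n - 1 := by omega
        have h2 : ((i:ℕ):ℝ) ≤ ((n - 1 : ℕ) : ℝ) := by exact_mod_cast this
        rwa [Nat.cast_sub (by omega), Nat.cast_one] at h2
      have hi0 : (0:ℝ) ≤ ((i:ℕ):ℝ) := Nat.cast_nonneg _
      have halg1 := halg β k₁
      have hEq0 : z * k₁ = k' + ((i:ℕ):ℂ) := hEq.symm
      have hEq' : z * k₁ = k' + (((i:ℕ):ℝ):ℂ) := by rw [hEq0]; norm_cast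
      have hkey1 : F (β + φ) (k' + (((i:ℕ):ℝ):ℂ)) = r * F β k₁ + c * Real.cos (β + φ) := by
        rw [← hEq']; exact halg1
      rw [hshift] at hkey1
      have hFk' : F (β + φ) k' ≤ S (β + φ) := by
        rw [hS2]; exact (isMaxOn_iff.mp hm₂) k' hk'
      have h2c : (n:ℝ) - 1 = 2 * c := by rw [hc]; ring
      have habs1 : ((i:ℕ):ℝ) * Real.cos (β + φ) - c * Real.cos (β + φ) ≤ c * |Real.cos (β + φ)| := by
        rcases le_or_gt 0 (Real.cos (β + φ)) with hca | hca
        · rw [abs_of_nonneg hca]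
          have h6 := mul_le_mul_of_nonneg_right hi hca
          have h5 : ((n:ℝ) - 1) * Real.cos (β + φ) = 2 * c * Real.cos (β + φ) := by rw [h2c]
          linarith
        · rw [abs_of_neg hca]
          have := mul_nonpos_of_nonneg_of_nonpos hi0 hca.le
          linarith
      rw [hS1]
      linarith
    have hge : S (β + φ) + c * |Real.cos (β + φ)| ≤ r * S β := by
      rcases le_or_gt 0 (Real.cos (β + φ)) with hca | hca
      · -- use i = n - 1
        have hmem : k₂ + (((⟨n - 1, by omega⟩ : Fin n) : ℕ) : ℂ) ∈
            ⋃ i : Fin n, (fun k => k + (i : ℂ)) '' K :=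
          Set.mem_iUnion.mpr ⟨⟨n - 1, by omega⟩, ⟨k₂, hk₂, rfl⟩⟩
        rw [← hself] at hmem
        rcases hmem with ⟨k, hk, hzk⟩
        have h1 : F (β + φ) (z * k) = r * F β k + c * Real.cos (β + φ) := halg β k
        have hzk0 : z * k = k₂ + ((n - 1 : ℕ) : ℂ) := hzk
        have h2 : F (β + φ) (z * k) = S (β + φ) + ((n:ℝ) - 1) * Real.cos (β + φ) := by
          have hzk1 : z * k = k₂ + ((((n - 1 : ℕ):ℝ)):ℂ) := by rw [hzk0]; norm_cast
          rw [hzk1, hshift, ← hS2]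
          congr 2
          rw [Nat.cast_sub (by omega), Nat.cast_one]
        have h3 : F β k ≤ S β := by rw [hS1]; exact (isMaxOn_iff.mp hm₁) k hk
        have h4 : r * F β k ≤ r * S β := mul_le_mul_of_nonneg_left h3 hr0.le
        rw [abs_of_nonneg hca]
        have h2c : (n:ℝ) - 1 = 2 * c := by rw [hc]; ring
        have h5 : ((n:ℝ) - 1) * Real.cos (β + φ) = 2 * c * Real.cos (β + φ) := by rw [h2c]
        linarith
      · -- use i = 0
        have hmem : k₂ + (((⟨0, by omega⟩ : Fin n) : ℕ) : ℂ) ∈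
            ⋃ i : Fin n, (fun k => k + (i : ℂ)) '' K :=
          Set.mem_iUnion.mpr ⟨⟨0, by omega⟩, ⟨k₂, hk₂, rfl⟩⟩
        rw [← hself] at hmem
        rcases hmem with ⟨k, hk, hzk⟩
        have h1 : F (β + φ) (z * k) = r * F β k + c * Real.cos (β + φ) := halg β k
        have hzk0 : z * k = k₂ + ((0 : ℕ) : ℂ) := hzk
        have h2 : F (β + φ) (z * k) = S (β + φ) := by
          have hzk1 : z * k = k₂ + (((0:ℝ)):ℂ) := by rw [hzk0]; norm_cast
          rw [hzk1, hshift, ← hS2]; ring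
        have h3 : F β k ≤ S β := by rw [hS1]; exact (isMaxOn_iff.mp hm₁) k hk
        have h4 : r * F β k ≤ r * S β := mul_le_mul_of_nonneg_left h3 hr0.le
        rw [abs_of_neg hca]
        linarith
    linarith
  -- telescoping
  set a : ℕ → ℝ := fun j => ((n:ℝ) - 1) * r⁻¹ ^ (j + 1) * |Real.cos (α + ((j:ℝ) + 1) * φ)| with haa
  have hrne : r ≠ 0 := ne_of_gt hr0
  have htel : ∀ M : ℕ, ∑ j ∈ Finset.range M, a j
      = 2 * S α - 2 * r⁻¹ ^ M * S (α + M * φ) := by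
    intro M
    induction M with
    | zero => simp
    | succ M ih =>
      rw [Finset.sum_range_succ, ih]
      have h := hkey (α + M * φ)
      rw [show α + (M:ℝ) * φ + φ = α + ((M:ℝ) + 1) * φ by ring] at h
      have hpow : r⁻¹ ^ (M + 1) * r = r⁻¹ ^ M := by
        rw [pow_succ]; field_simp
      have hca : α + (((M+1:ℕ)):ℝ) * φ = α + ((M:ℝ) + 1) * φ := by push_cast; ring
      rw [haa]
      simp only [hca]
      have h2c : (n:ℝ) - 1 = 2 * c := by rw [hc]; ring
      rw [h2c]
      linear_combination (-(2:ℝ) * r⁻¹ ^ (M + 1)) * h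
        + (2 * S (α + (M:ℝ) * φ)) * hpow
  have hinv0 : (0:ℝ) ≤ r⁻¹ := inv_nonneg.mpr hr0.le
  have hinv1 : r⁻¹ < 1 := inv_lt_one_of_one_lt₀ hr
  have hnn : ∀ j, 0 ≤ a j := by
    intro j
    have : (0:ℝ) ≤ (n:ℝ) - 1 := by
      have : (2:ℝ) ≤ (n:ℝ) := by exact_mod_cast hn
      linarith
    positivity
  have hsummable : Summable a := by
    apply Summable.of_nonneg_of_le (f := fun j => (((n:ℝ) - 1) * r⁻¹) * r⁻¹ ^ j) hnn
    · intro j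
      rw [haa]
      have hcos1 : |Real.cos (α + ((j:ℝ) + 1) * φ)| ≤ 1 := Real.abs_cos_le_one _
      have hpnn : (0:ℝ) ≤ ((n:ℝ) - 1) * r⁻¹ ^ (j + 1) := by
        have : (0:ℝ) ≤ (n:ℝ) - 1 := by
          have : (2:ℝ) ≤ (n:ℝ) := by exact_mod_cast hn
          linarith
        positivity
      calc ((n:ℝ) - 1) * r⁻¹ ^ (j + 1) * |Real.cos (α + ((j:ℝ) + 1) * φ)|
          ≤ ((n:ℝ) - 1) * r⁻¹ ^ (j + 1) * 1 := by
            exact mul_le_mul_of_nonneg_left hcos1 hpnn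
        _ = (((n:ℝ) - 1) * r⁻¹) * r⁻¹ ^ j := by rw [pow_succ]; ring
    · exact (summable_geometric_of_lt_one hinv0 hinv1).mul_left _
  rw [hsummable.hasSum_iff_tendsto_nat]
  simp only [htel]
  have htend : Filter.Tendsto (fun M : ℕ => 2 * r⁻¹ ^ M * S (α + M * φ))
      Filter.atTop (nhds 0) := by
    apply squeeze_zero_norm (a := fun M : ℕ => (2 * C) * r⁻¹ ^ M)
    · intro M
      have hb := hSbound (α + M * φ)
      have hp : (0:ℝ) ≤ r⁻¹ ^ M := by positivity
      rw [Real.norm_eq_abs, abs_mul, abs_mul, abs_of_nonneg hp, abs_two]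
      have h7 := mul_le_mul_of_nonneg_left hb hp
      linarith
    · have := (tendsto_pow_atTop_nhds_zero_of_lt_one hinv0 hinv1).const_mul (2 * C)
      simpa using this
  have hfin := Filter.Tendsto.sub (tendsto_const_nhds (x := 2 * S α)
    (f := Filter.atTop (α := ℕ))) htend
  rw [sub_zero] at hfin
  exact hfin
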